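/- LTL progression is sound: for every infinite sequence σ of truth assignments over AP, every LTL formula φ, and every position k, ⟨σ,k⟩ ⊨ φ if and only if ⟨σ,k+1⟩ ⊨ prog(σ_k, φ). -/
import Mathlib


/-- LTL formulas over atoms `α`, with constants `tt`/`ff`, negation, conjunction,
disjunction, next `○` and until `U`. -/
inductive LTL (α : Type) : Type where
  | tt : LTL α
  | ff : LTL α
  | atom : α → LTL α
  | not : LTL α → LTL α
  | and : LTL α → LTL α → LTL α
  | or : LTL α → LTL α → LTL α
  | next : LTL α → LTL α
  | untl : LTL α → LTL α → LTL α

/-- Satisfaction `⟨σ,i⟩ ⊨ φ` over infinite traces `σ : ℕ → Set α`. -/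
def SatInf {α : Type} (σ : ℕ → Set α) : ℕ → LTL α → Prop
  | _, .tt => True
  | _, .ff => False
  | i, .atom p => p ∈ σ i
  | i, .not φ => ¬ SatInf σ i φ
  | i, .and φ ψ => SatInf σ i φ ∧ SatInf σ i ψ
  | i, .or φ ψ => SatInf σ i φ ∨ SatInf σ i ψ
  | i, .next φ => SatInf σ (i + 1) φ
  | i, .untl φ ψ => ∃ j, i ≤ j ∧ SatInf σ j ψ ∧ ∀ k, i ≤ k → k < j → SatInf σ k φ

/-- Satisfaction `⟨σ,i⟩ ⊨ φ` over finite traces `σ : List (Set α)`;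
positions of `σ` are the indices `< σ.length`. -/
def SatFin {α : Type} (σ : List (Set α)) : ℕ → LTL α → Prop
  | _, .tt => True
  | _, .ff => False
  | i, .atom p => p ∈ σ.getD i ∅
  | i, .not φ => ¬ SatFin σ i φ
  | i, .and φ ψ => SatFin σ i φ ∧ SatFin σ i ψ
  | i, .or φ ψ => SatFin σ i φ ∨ SatFin σ i ψ
  | i, .next φ => i + 1 < σ.length ∧ SatFin σ (i + 1) φ
  | i, .untl φ ψ =>
      ∃ j, i ≤ j ∧ j < σ.length ∧ SatFin σ j ψ ∧ ∀ k, i ≤ k → k < j → SatFin σ k φ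

/-- The co-safe fragment of LTL: negation on atoms only. -/
inductive CoSafe {α : Type} : LTL α → Prop
  | atom (p : α) : CoSafe (.atom p)
  | natom (p : α) : CoSafe (.not (.atom p))
  | and {φ ψ : LTL α} : CoSafe φ → CoSafe ψ → CoSafe (.and φ ψ)
  | or {φ ψ : LTL α} : CoSafe φ → CoSafe ψ → CoSafe (.or φ ψ)
  | next {φ : LTL α} : CoSafe φ → CoSafe (.next φ)
  | untl {φ ψ : LTL α} : CoSafe φ → CoSafe ψ → CoSafe (.untl φ ψ)

/-- The finite prefix `σ₀, …, σᵢ` of an infinite trace `σ`. -/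
def prefixUpTo {α : Type} (σ : ℕ → Set α) (i : ℕ) : List (Set α) :=
  (List.range (i + 1)).map σ

/-- Concatenation `w · σ'` of a finite trace with an infinite trace. -/
def appendInf {α : Type} (w : List (Set α)) (σ' : ℕ → Set α) : ℕ → Set α :=
  fun n => w.getD n (σ' (n - w.length))

open Classical in
/-- LTL progression `prog(σ_k, φ)` with respect to a single truth assignment. -/
noncomputable def prog {α : Type} (v : Set α) : LTL α → LTL α
  | .tt => .tt
  | .ff => .ff
  | .atom p => if p ∈ v then .tt else .ff
  | .not φ => .not (prog v φ)
  | .and φ ψ => .and (prog v φ) (prog v ψ)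
  | .or φ ψ => .or (prog v φ) (prog v ψ)
  | .next φ => φ
  | .untl φ ψ => .or (prog v ψ) (.and (prog v φ) (.untl φ ψ))

/-- LTL progression is sound: for every infinite trace σ, LTL
formula φ and position k, ⟨σ,k⟩ ⊨ φ iff ⟨σ,k+1⟩ ⊨ prog(σ_k, φ). -/
lemma untl_unfold {α : Type} (σ : ℕ → Set α) (k : ℕ) (φ ψ : LTL α) :
    SatInf σ k (.untl φ ψ) ↔
      SatInf σ k ψ ∨ (SatInf σ k φ ∧ SatInf σ (k + 1) (.untl φ ψ)) := by
  constructor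
  · rintro ⟨j, hkj, hψ, hφ⟩
    rcases Nat.eq_or_lt_of_le hkj with rfl | hlt
    · exact Or.inl hψ
    · refine Or.inr ⟨hφ k le_rfl hlt, j, hlt, hψ, fun m hm hmj => hφ m (le_of_lt (Nat.lt_of_lt_of_le (Nat.lt_succ_self k) hm)) hmj⟩
  · rintro (h | ⟨hφ, j, hkj, hψ, hrest⟩)
    · exact ⟨k, le_rfl, h, fun m hm hmj => absurd (lt_of_le_of_lt hm hmj) (lt_irrefl _)⟩
    · refine ⟨j, le_trans (Nat.le_succ k) hkj, hψ, fun m hm hmj => ?_⟩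
      rcases Nat.eq_or_lt_of_le hm with rfl | hlt
      · exact hφ
      · exact hrest m hlt hmj

theorem progression_sound {AP : Type} (σ : ℕ → Set AP) (φ : LTL AP) (k : ℕ) :
    SatInf σ k φ ↔ SatInf σ (k + 1) (prog (σ k) φ) := by
  induction φ generalizing k with
  | tt => simp [SatInf, prog]
  | ff => simp [SatInf, prog]
  | atom p =>
    by_cases h : p ∈ σ k <;> simp [SatInf, prog, h]
  | not φ ih => simp [SatInf, prog, ih k]
  | and φ ψ ihφ ihψ => simp [SatInf, prog, ihφ k, ihψ k]
  | or φ ψ ihφ ihψ => simp [SatInf, prog, ihφ k, ihψ k]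
  | next φ ih => simp [SatInf, prog]
  | untl φ ψ ihφ ihψ =>
    rw [untl_unfold]
    show _ ↔ SatInf σ (k+1) (.or (prog (σ k) ψ) (.and (prog (σ k) φ) (.untl φ ψ)))
    simp only [SatInf, ← ihφ k, ← ihψ k]
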